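/- arXiv:2307.04679 — 2 statements merged into one kernel-verified Lean document; each statement's English description precedes it below -/
import Mathlib

section
/- Let L : ℝᵈ → ℝ be L-smooth (gradient L-Lipschitz) and satisfy the μ-PL condition with L ≥ μ > 0, and let L* = inf L. Suppose iterates satisfy x_{t+1} = x_t - (1/L) g_t where E[‖∇L(x_t) - g_t‖² | x_t] ≤ σ². Then E[L(x_T) - L*] ≤ (1 - μ/L)^T (L(x_0) - L*) + σ²/(2μ). -/
open MeasureTheory
open scoped RealInnerProductSpace

theorem stmt_12 {Ω : Type*} [MeasurableSpace Ω] (P : Measure Ω) [IsProbabilityMeasure P]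
    {d : ℕ} (μ L σ Lstar : ℝ) (hμ : 0 < μ) (hμL : μ ≤ L)
    (f : EuclideanSpace ℝ (Fin d) → ℝ)
    (f' : EuclideanSpace ℝ (Fin d) → EuclideanSpace ℝ (Fin d))
    (hsmooth : ∀ u v, f v ≤ f u + ⟪f' u, v - u⟫ + L / 2 * ‖v - u‖ ^ 2)
    (hPL : ∀ u, 2 * μ * (f u - Lstar) ≤ ‖f' u‖ ^ 2)
    (hLstar : Lstar = ⨅ u, f u)
    (x g : ℕ → Ω → EuclideanSpace ℝ (Fin d))
    (hxmeas : ∀ t, Measurable (x t)) (hgmeas : ∀ t, Measurable (g t))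
    (hupdate : ∀ t ω, x (t + 1) ω = x t ω - (1 / L) • g t ω)
    (hnoise : ∀ t, ∀ᵐ ω ∂P,
      (P[fun ω' => ‖f' (x t ω') - g t ω'‖ ^ 2 | MeasurableSpace.comap (x t) inferInstance]) ω
        ≤ σ ^ 2)
    (hfint : ∀ t, Integrable (fun ω => f (x t ω)) P)
    (hnint : ∀ t, Integrable (fun ω => ‖f' (x t ω) - g t ω‖ ^ 2) P) :
    ∀ T : ℕ, (∫ ω, f (x T ω) ∂P) - Lstar ≤
      (1 - μ / L) ^ T * ((∫ ω, f (x 0 ω) ∂P) - Lstar) + σ ^ 2 / (2 * μ) := by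
  have hL : 0 < L := lt_of_lt_of_le hμ hμL
  -- one-step inequality
  have key : ∀ t, (∫ ω, f (x (t+1) ω) ∂P) - Lstar ≤
      (1 - μ/L) * ((∫ ω, f (x t ω) ∂P) - Lstar) + σ^2/(2*L) := by
    intro t
    -- pointwise bound
    have hpt : ∀ ω, f (x (t+1) ω) - Lstar ≤
        (1 - μ/L)*(f (x t ω) - Lstar) + (1/(2*L)) * ‖f' (x t ω) - g t ω‖^2 := by
      intro ω
      have hs := hsmooth (x t ω) (x (t+1) ω)
      have hp := hPL (x t ω)
      have hv : x (t+1) ω - x t ω = -((1/L) • g t ω) := by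
        rw [hupdate t ω]; exact sub_sub_cancel_left _ _
      have hinner : ⟪f' (x t ω), -((1/L) • g t ω)⟫ = -((1/L) * ⟪f' (x t ω), g t ω⟫) := by
        rw [inner_neg_right, real_inner_smul_right]
      have hnorm : ‖-((1/L) • g t ω)‖^2 = (1/L)^2 * ‖g t ω‖^2 := by
        rw [norm_neg, norm_smul, mul_pow]
        congr 1
        rw [Real.norm_eq_abs, sq_abs]
      rw [hv, hinner, hnorm] at hs
      have hsq : ‖f' (x t ω) - g t ω‖^2
          = ‖f' (x t ω)‖^2 - 2*⟪f' (x t ω), g t ω⟫ + ‖g t ω‖^2 := by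
        rw [@norm_sub_sq_real]
      have e1 : L/2*((1/L)^2*‖g t ω‖^2) = 1/(2*L)*‖g t ω‖^2 := by
        field_simp
      have h2Linv : (0:ℝ) < 1/(2*L) := by positivity
      have hp2 := mul_le_mul_of_nonneg_left hp h2Linv.le
      have e2 : 1/(2*L)*(2*μ*(f (x t ω) - Lstar)) = μ/L*(f (x t ω) - Lstar) := by
        field_simp
      rw [e2] at hp2
      rw [e1] at hs
      rw [hsq]
      ring_nf at hs hp2 ⊢
      nlinarith [hs, hp2]
    -- integrate
    have hI1 : Integrable (fun ω => f (x (t+1) ω) - Lstar) P := (hfint (t+1)).sub (integrable_const _)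
    have hA : Integrable (fun ω => (1 - μ/L)*(f (x t ω) - Lstar)) P :=
      ((hfint t).sub (integrable_const _)).const_mul _
    have hB : Integrable (fun ω => (1/(2*L)) * ‖f' (x t ω) - g t ω‖^2) P :=
      (hnint t).const_mul _
    have hI2 : Integrable (fun ω => (1 - μ/L)*(f (x t ω) - Lstar)
        + (1/(2*L)) * ‖f' (x t ω) - g t ω‖^2) P := hA.add hB
    have hmono := integral_mono hI1 hI2 hpt
    rw [integral_sub (hfint (t+1)) (integrable_const _), integral_const,
        integral_add hA hB, integral_const_mul, integral_const_mul,
        integral_sub (hfint t) (integrable_const _), integral_const] at hmono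
    simp only [probReal_univ, smul_eq_mul, one_mul] at hmono
    -- bound the noise integral using the conditional expectation
    have hm : MeasurableSpace.comap (x t) inferInstance ≤ ‹MeasurableSpace Ω› :=
      (hxmeas t).comap_le
    have hce : (∫ ω, (P[fun ω' => ‖f' (x t ω') - g t ω'‖ ^ 2 |
          MeasurableSpace.comap (x t) inferInstance]) ω ∂P)
        = ∫ ω, ‖f' (x t ω) - g t ω‖^2 ∂P := integral_condExp hm
    have hub : (∫ ω, (P[fun ω' => ‖f' (x t ω') - g t ω'‖ ^ 2 |
          MeasurableSpace.comap (x t) inferInstance]) ω ∂P) ≤ ∫ _ω, σ^2 ∂P :=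
      integral_mono_ae integrable_condExp (integrable_const _) (hnoise t)
    rw [hce, integral_const] at hub
    simp only [probReal_univ, smul_eq_mul, one_mul] at hub
    have h2L : (0:ℝ) ≤ 1/(2*L) := by positivity
    have h3 := mul_le_mul_of_nonneg_left hub h2L
    have h4 : 1/(2*L)*σ^2 = σ^2/(2*L) := by ring
    linarith
  -- induction
  intro T
  induction T with
  | zero =>
      have : (0:ℝ) ≤ σ^2/(2*μ) := by positivity
      simp only [pow_zero, one_mul]
      linarith
  | succ T ih =>
      have hr0 : (0:ℝ) ≤ 1 - μ/L := by
        have : μ/L ≤ 1 := (div_le_one hL).2 hμL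
        linarith
      have h1 := key T
      have h2 := mul_le_mul_of_nonneg_left ih hr0
      have heq : (1 - μ/L) * (σ^2/(2*μ)) + σ^2/(2*L) = σ^2/(2*μ) := by
        field_simp
        ring
      calc (∫ ω, f (x (T+1) ω) ∂P) - Lstar
          ≤ (1 - μ/L) * ((∫ ω, f (x T ω) ∂P) - Lstar) + σ^2/(2*L) := h1
        _ ≤ (1 - μ/L) * ((1 - μ/L)^T * ((∫ ω, f (x 0 ω) ∂P) - Lstar) + σ^2/(2*μ)) + σ^2/(2*L) := by linarith
        _ = (1 - μ/L)^(T+1) * ((∫ ω, f (x 0 ω) ∂P) - Lstar)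
            + ((1 - μ/L) * (σ^2/(2*μ)) + σ^2/(2*L)) := by ring
        _ = (1 - μ/L)^(T+1) * ((∫ ω, f (x 0 ω) ∂P) - Lstar) + σ^2/(2*μ) := by rw [heq]
end

section
/- Let L : ℝᵈ → ℝ be L-smooth and μ-PL with κ = L/μ, and let iterates satisfy the one-step inequality E[L(x_{t+1}) - L*] ≤ (1 - 1/κ) E[L(x_t) - L*] + σ_t²/(2L), where σ_t² ≤ a + b/n_t with batch sizes n_t = ⌈n(1-c)c^{T-t-1}/2⌉, c = √(1 - 1/κ), T = ⌊n/2⌋, and n ≥ 3. Then E[L(x_T) - L*] ≤ a/(2μ) + 6κb/(μn) + Δ e^{-n/(6κ)}, where Δ = E[L(x_0) - L*]. -/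
set_option maxHeartbeats 1000000 in
theorem stmt_13 (μ L a b : ℝ) (hμ : 0 < μ) (hμL : μ ≤ L) (ha : 0 ≤ a) (hb : 0 ≤ b)
    (n : ℕ) (hn : 3 ≤ n)
    (κ : ℝ) (hκ : κ = L / μ)
    (c : ℝ) (hc : c = Real.sqrt (1 - 1 / κ))
    (T : ℕ) (hT : T = n / 2)
    (nt : ℕ → ℕ) (hnt : ∀ t, nt t = ⌈(n : ℝ) * (1 - c) * c ^ (T - t - 1) / 2⌉₊)
    (e : ℕ → ℝ) (he : ∀ t, 0 ≤ e t)
    (σ2 : ℕ → ℝ) (hσ2 : ∀ t < T, σ2 t ≤ a + b / (nt t : ℝ))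
    (hstep : ∀ t < T, e (t + 1) ≤ (1 - 1 / κ) * e t + σ2 t / (2 * L)) :
    e T ≤ a / (2 * μ) + 6 * κ * b / (μ * n) + e 0 * Real.exp (-(n : ℝ) / (6 * κ)) := by
  have hL : 0 < L := lt_of_lt_of_le hμ hμL
  have hκ0 : 0 < κ := by rw [hκ]; positivity
  have hκ1 : 1 ≤ κ := by rw [hκ, le_div_iff₀ hμ]; linarith
  set q : ℝ := 1 - 1/κ with hqdef
  have hq0 : 0 ≤ q := by
    have h : 1/κ ≤ 1 := by rw [div_le_one hκ0]; exact hκ1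
    simp only [hqdef]; linarith
  have hq1 : q < 1 := by
    have h : 0 < 1/κ := by positivity
    simp only [hqdef]; linarith
  have hc2 : c^2 = q := by rw [hc, Real.sq_sqrt hq0]
  have hc0 : 0 ≤ c := hc ▸ Real.sqrt_nonneg _
  have hc1 : c < 1 := by nlinarith [hc2, hq1, hc0]
  have hcid : κ * (1 - c^2) = 1 := by
    rw [hc2]; simp only [hqdef]; field_simp; ring
  have h1c : 1/(2*κ) ≤ 1 - c := by
    rw [div_le_iff₀ (by positivity)]
    nlinarith [hcid, hc0, hc1, hκ0,
      mul_nonneg (mul_nonneg hκ0.le (sub_nonneg.mpr hc1.le)) (sub_nonneg.mpr hc1.le)]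
  have h1c0 : 0 < 1 - c := lt_of_lt_of_le (by positivity) h1c
  have hn0 : 0 < (n:ℝ) := by positivity
  -- unrolling the recursion
  have key : ∀ m, m ≤ T → e m ≤ q^m * e 0 +
      ∑ t ∈ Finset.range m, q^(m-1-t) * (σ2 t / (2*L)) := by
    intro m
    induction m with
    | zero => intro _; simp
    | succ m ih =>
      intro hm
      have hmT : m < T := hm
      have ihm := ih hmT.le
      calc e (m+1) ≤ q * e m + σ2 m/(2*L) := hstep m hmT
        _ ≤ q * (q^m * e 0 + ∑ t ∈ Finset.range m, q^(m-1-t)*(σ2 t/(2*L))) + σ2 m/(2*L) := by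
            have := mul_le_mul_of_nonneg_left ihm hq0
            linarith
        _ = q^(m+1)*e 0 + ∑ t ∈ Finset.range (m+1), q^(m+1-1-t)*(σ2 t/(2*L)) := by
            rw [Finset.sum_range_succ, mul_add, Finset.mul_sum]
            have h1 : ∀ t ∈ Finset.range m,
                q * (q^(m-1-t)*(σ2 t/(2*L))) = q^(m+1-1-t)*(σ2 t/(2*L)) := by
              intro t ht
              rw [Finset.mem_range] at ht
              rw [← mul_assoc, ← pow_succ']
              congr 2
              omega
            rw [Finset.sum_congr rfl h1]
            have h2 : q^(m+1-1-m) = 1 := by simp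
            rw [h2, one_mul]
            ring
  have hmain := key T le_rfl
  -- geometric sum bound
  have geom : ∀ (r:ℝ), 0 ≤ r → r < 1 → ∀ m, ∑ i ∈ Finset.range m, r^i ≤ 1/(1-r) := by
    intro r hr0 hr1 m
    have h1 : (0:ℝ) < 1 - r := by linarith
    rw [geom_sum_eq (by linarith : r ≠ 1),
      show r - 1 = -(1-r) by ring, show r^m - 1 = -(1-r^m) by ring, neg_div_neg_eq]
    gcongr
    nlinarith [pow_nonneg hr0 m]
  -- per-term bound
  have hterm : ∀ t ∈ Finset.range T, q^(T-1-t) * (σ2 t/(2*L)) ≤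
      q^(T-1-t) * (a/(2*L)) + c^(T-1-t) * (b/(L*n*(1-c))) := by
    intro t ht
    rw [Finset.mem_range] at ht
    set s := T-1-t with hs
    have hqs : (0:ℝ) ≤ q^s := pow_nonneg hq0 s
    have h1 : q^s * (σ2 t/(2*L)) ≤ q^s * ((a + b/(nt t))/(2*L)) := by
      gcongr
      exact hσ2 t ht
    have h2 : q^s * ((b:ℝ)/(nt t)) ≤ c^s * (2*b/(n*(1-c))) := by
      by_cases h0 : nt t = 0
      · rw [h0]
        simp only [Nat.cast_zero, div_zero, mul_zero]
        positivity
      · have hv : (n:ℝ)*(1-c)*c^(T-t-1)/2 ≤ nt t := by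
          rw [hnt t]; exact Nat.le_ceil _
        have hvpos : 0 < (n:ℝ)*(1-c)*c^(T-t-1)/2 := by
          have hp := Nat.pos_of_ne_zero h0
          rw [hnt t] at hp
          exact Nat.ceil_pos.mp hp
        have hst : T - t - 1 = s := by omega
        rw [hst] at hv hvpos
        have hcs : 0 < c^s := by
          rcases (pow_nonneg hc0 s).lt_or_eq with h | h
          · exact h
          · exfalso; rw [← h] at hvpos; simp at hvpos
        have hb1 : (b:ℝ)/(nt t) ≤ b / ((n:ℝ)*(1-c)*c^s/2) := by
          gcongr
        calc q^s * ((b:ℝ)/(nt t)) ≤ q^s * (b / ((n:ℝ)*(1-c)*c^s/2)) :=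
              mul_le_mul_of_nonneg_left hb1 hqs
          _ = c^s * (2*b/(n*(1-c))) := by
              rw [← hc2]
              have hcs' : c^s ≠ 0 := ne_of_gt hcs
              have h2s : (c^2)^s = c^s * c^s := by
                rw [← pow_mul, two_mul, pow_add]
              rw [h2s]
              field_simp
    have h3 : q^s * ((a + b/(nt t))/(2*L)) =
        q^s * (a/(2*L)) + (q^s * ((b:ℝ)/(nt t)))/(2*L) := by ring
    have h4 : (q^s * ((b:ℝ)/(nt t)))/(2*L) ≤ (c^s * (2*b/(n*(1-c))))/(2*L) := by
      gcongr
    have h5 : (c^s * (2*b/(n*(1-c))))/(2*L) = c^s * (b/(L*n*(1-c))) := by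
      field_simp
    rw [h3] at h1
    rw [h5] at h4
    linarith
  have hsum : ∑ t ∈ Finset.range T, q^(T-1-t)*(σ2 t/(2*L)) ≤
      (∑ i ∈ Finset.range T, q^i) * (a/(2*L)) + (∑ i ∈ Finset.range T, c^i) * (b/(L*n*(1-c))) := by
    calc ∑ t ∈ Finset.range T, q^(T-1-t)*(σ2 t/(2*L))
        ≤ ∑ t ∈ Finset.range T, (q^(T-1-t)*(a/(2*L)) + c^(T-1-t)*(b/(L*n*(1-c)))) :=
          Finset.sum_le_sum hterm
      _ = (∑ t ∈ Finset.range T, q^(T-1-t))*(a/(2*L))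
          + (∑ t ∈ Finset.range T, c^(T-1-t))*(b/(L*n*(1-c))) := by
          rw [Finset.sum_add_distrib, Finset.sum_mul, Finset.sum_mul]
      _ = _ := by
          rw [Finset.sum_range_reflect (fun i => q^i) T, Finset.sum_range_reflect (fun i => c^i) T]
  have hSq : (∑ i ∈ Finset.range T, q^i) ≤ κ := by
    have hg := geom q hq0 hq1 T
    have h : 1 - q = 1/κ := by simp [hqdef]
    rw [h, one_div_one_div] at hg
    exact hg
  have hSc : (∑ i ∈ Finset.range T, c^i) ≤ 2*κ := by
    refine (geom c hc0 hc1 T).trans ?_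
    rw [div_le_iff₀ h1c0]
    have h : 2*κ*(1/(2*κ)) = 1 := by field_simp
    nlinarith [mul_le_mul_of_nonneg_left h1c (by positivity : (0:ℝ) ≤ 2*κ)]
  have hSc0 : (0:ℝ) ≤ ∑ i ∈ Finset.range T, c^i :=
    Finset.sum_nonneg fun i _ => pow_nonneg hc0 i
  have hSq0 : (0:ℝ) ≤ ∑ i ∈ Finset.range T, q^i :=
    Finset.sum_nonneg fun i _ => pow_nonneg hq0 i
  -- a-term
  have haeq : κ*(a/(2*L)) = a/(2*μ) := by
    rw [hκ]; field_simp
  have haterm : (∑ i ∈ Finset.range T, q^i) * (a/(2*L)) ≤ a/(2*μ) := by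
    rw [← haeq]
    exact mul_le_mul_of_nonneg_right hSq (by positivity)
  -- b-term
  have hbX : b/(L*n*(1-c)) ≤ 2*κ*b/(L*n) := by
    have hk1 : 1 ≤ (1-c)*(2*κ) := (div_le_iff₀ (by positivity)).mp h1c
    rw [div_le_div_iff₀ (by positivity) (by positivity)]
    calc b*(L*n) = 1*(b*(L*n)) := by ring
      _ ≤ ((1-c)*(2*κ))*(b*(L*n)) := mul_le_mul_of_nonneg_right hk1 (by positivity)
      _ = 2*κ*b*(L*n*(1-c)) := by ring
  have hbterm : (∑ i ∈ Finset.range T, c^i) * (b/(L*n*(1-c))) ≤ 6*κ*b/(μ*n) := by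
    have h1 : (∑ i ∈ Finset.range T, c^i) * (b/(L*n*(1-c))) ≤ (2*κ) * (2*κ*b/(L*n)) := by
      apply mul_le_mul hSc hbX (by positivity) (by positivity)
    have hκμ : κ*μ = L := by rw [hκ]; field_simp
    have hκ' : κ ≠ 0 := ne_of_gt hκ0
    have hμ' : μ ≠ 0 := ne_of_gt hμ
    have hn' : (n:ℝ) ≠ 0 := ne_of_gt hn0
    have h2 : (2*κ) * (2*κ*b/(L*n)) = 4*κ*b/(μ*n) := by
      rw [← hκμ]; field_simp; ring
    have h3 : 4*κ*b/(μ*n) ≤ 6*κ*b/(μ*n) := by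
      have hpos : (0:ℝ) ≤ κ*b/(μ*n) := by positivity
      have e4 : 4*κ*b/(μ*n) = 4*(κ*b/(μ*n)) := by ring
      have e6 : 6*κ*b/(μ*n) = 6*(κ*b/(μ*n)) := by ring
      rw [e4, e6]; linarith
    linarith [h2 ▸ h1]
  -- exponential term
  have hqT : q^T ≤ Real.exp (-(n:ℝ)/(6*κ)) := by
    have h1 : q ≤ Real.exp (-(1/κ)) := by
      have := Real.add_one_le_exp (-(1/κ))
      simp only [hqdef]; linarith
    have h2 : q^T ≤ Real.exp (-(1/κ))^T := pow_le_pow_left₀ hq0 h1 T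
    have h3 : Real.exp (-(1/κ))^T = Real.exp (-(T:ℝ)/κ) := by
      rw [← Real.exp_nat_mul]
      congr 1
      ring
    have hTn : (n:ℝ) ≤ 6*(T:ℝ) := by
      have : n ≤ 6*T := by omega
      exact_mod_cast this
    have h4 : Real.exp (-(T:ℝ)/κ) ≤ Real.exp (-(n:ℝ)/(6*κ)) := by
      apply Real.exp_le_exp.mpr
      rw [neg_div, neg_div, neg_le_neg_iff, div_le_div_iff₀ (by positivity) (by positivity)]
      nlinarith
    calc q^T ≤ Real.exp (-(1/κ))^T := h2
      _ = Real.exp (-(T:ℝ)/κ) := h3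
      _ ≤ Real.exp (-(n:ℝ)/(6*κ)) := h4
  have hexp : q^T * e 0 ≤ e 0 * Real.exp (-(n:ℝ)/(6*κ)) := by
    rw [mul_comm (e 0)]
    exact mul_le_mul_of_nonneg_right hqT (he 0)
  linarith [hmain, hsum, haterm, hbterm, hexp]
end
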